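/- Let P(n,m)(k) be defined by the recurrence P(n,m)(k) = (α_n/(α_n+β_m))·P(n-1,m)(k) + (β_m/(α_n+β_m))·P(n,m-1)(k) for n,m ≥ 1, with P(n,0)(k) = δ_{k,n} and P(0,m)(k) = δ_{k,0}, where (α_n) and (β_m) are sequences of positive reals with pairwise distinct terms (α_0 = 0). Then for n,m ≥ 1 and 0 ≤ k ≤ n: P(n,m)(k) = (∏_{h=1}^{m} β_h)·(∏_{h=k+1}^{n} α_h)·Σ_{ℓ=1}^{m} 1/((∏_{j=k}^{n}(α_j+β_ℓ))·(∏_{i=1, i≠ℓ}^{m}(β_i - β_ℓ))). -/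

import Mathlib

open Finset Polynomial


/-- Lagrange identity: sum of basis polys evaluated at 0. -/
private lemma lag_sum_one (s : Finset ℕ) (v : ℕ → ℝ) (hinj : Set.InjOn v s)
    (hs : s.Nonempty) :
    ∑ l ∈ s, ∏ i ∈ s.erase l, (v i / (v i - v l)) = 1 := by
  have h := Lagrange.sum_basis hinj hs
  have h2 := congrArg (Polynomial.eval (0:ℝ)) h
  rw [Polynomial.eval_finset_sum, Polynomial.eval_one] at h2
  rw [← h2]
  refine Finset.sum_congr rfl fun l hl => ?_
  rw [Lagrange.basis, Polynomial.eval_prod]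
  refine Finset.prod_congr rfl fun i hi => ?_
  have hne : v l - v i ≠ 0 := by
    refine sub_ne_zero.mpr fun he => (Finset.mem_erase.mp hi).1 ?_
    exact (hinj hl (Finset.mem_of_mem_erase hi) he).symm
  have hne' : v i - v l ≠ 0 := by
    intro h'; apply hne; linarith [sub_eq_zero.mp h']
  rw [Lagrange.basisDivisor]
  simp only [Polynomial.eval_mul, Polynomial.eval_C, Polynomial.eval_sub, Polynomial.eval_X]
  field_simp
  ring

/-- Lagrange identity: top coefficients sum to zero. -/
private lemma lag_sum_zero (s : Finset ℕ) (v : ℕ → ℝ) (hinj : Set.InjOn v s)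
    (hcard : 2 ≤ s.card) :
    ∑ l ∈ s, (∏ i ∈ s.erase l, (v i - v l))⁻¹ = 0 := by
  have hs : s.Nonempty := Finset.card_pos.mp (by omega)
  have h := Lagrange.sum_basis hinj hs
  have h2 := congrArg (fun p => Polynomial.coeff p (s.card - 1)) h
  simp only [Polynomial.finset_sum_coeff, Polynomial.coeff_one] at h2
  rw [if_neg (by omega)] at h2
  have key : ∀ l ∈ s, (Lagrange.basis s v l).coeff (s.card - 1)
      = ∏ i ∈ s.erase l, (v l - v i)⁻¹ := by
    intro l hl
    have hd : (Lagrange.basis s v l).natDegree = s.card - 1 :=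
      Lagrange.natDegree_basis hinj hl
    rw [← hd, Polynomial.coeff_natDegree, Lagrange.basis, Polynomial.leadingCoeff_prod]
    refine Finset.prod_congr rfl fun i hi => ?_
    have hne : v l - v i ≠ 0 := by
      refine sub_ne_zero.mpr fun he => (Finset.mem_erase.mp hi).1 ?_
      exact (hinj hl (Finset.mem_of_mem_erase hi) he).symm
    rw [Lagrange.basisDivisor, Polynomial.leadingCoeff_mul, Polynomial.leadingCoeff_C,
      (Polynomial.monic_X_sub_C (v i)).leadingCoeff, mul_one]
  rw [Finset.sum_congr rfl key] at h2
  have conv : ∀ l ∈ s, (∏ i ∈ s.erase l, (v i - v l))⁻¹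
      = (-1 : ℝ) ^ (s.card - 1) * ∏ i ∈ s.erase l, (v l - v i)⁻¹ := by
    intro l hl
    have h3 : ∏ i ∈ s.erase l, (v i - v l) =
        (-1 : ℝ) ^ (s.card - 1) * ∏ i ∈ s.erase l, (v l - v i) := by
      rw [← Finset.card_erase_of_mem hl, ← Finset.prod_const (-1 : ℝ),
        ← Finset.prod_mul_distrib]
      exact Finset.prod_congr rfl fun i _ => by ring
    rw [h3, mul_inv, ← Finset.prod_inv_distrib]
    congr 1
    rw [← inv_pow, inv_neg, inv_one]
  rw [Finset.sum_congr rfl conv, ← Finset.mul_sum, h2, mul_zero]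


private lemma P_vanish (α β : ℕ → ℝ) (P : ℕ → ℕ → ℕ → ℝ)
    (hPrec : ∀ n m k, 1 ≤ n → 1 ≤ m →
      P n m k = (α n / (α n + β m)) * P (n - 1) m k +
        (β m / (α n + β m)) * P n (m - 1) k)
    (hP0 : ∀ n k, P n 0 k = if k = n then 1 else 0)
    (hP0' : ∀ m k, 1 ≤ m → P 0 m k = if k = 0 then 1 else 0) :
    ∀ m n k, n < k → P n m k = 0 := by
  intro m
  induction m with
  | zero => intro n k h; rw [hP0, if_neg (by omega)]
  | succ m ih =>
    intro n
    induction n with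
    | zero =>
      intro k h
      rw [hP0' (m+1) k (by omega), if_neg (by omega)]
    | succ n ihn =>
      intro k h
      rw [hPrec (n+1) (m+1) k (by omega) (by omega)]
      simp only [Nat.add_sub_cancel]
      rw [ihn k (by omega), ih (n+1) k h]
      ring

private lemma prod_erase_Icc_succ {m l : ℕ} (hl : l ∈ Finset.Icc 1 m) (f : ℕ → ℝ) :
    ∏ i ∈ (Finset.Icc 1 (m+1)).erase l, f i
      = (∏ i ∈ (Finset.Icc 1 m).erase l, f i) * f (m+1) := by
  rw [Finset.mem_Icc] at hl
  have h1 : (Finset.Icc 1 (m+1)).erase l = insert (m+1) ((Finset.Icc 1 m).erase l) := by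
    ext x
    simp only [Finset.mem_erase, Finset.mem_Icc, Finset.mem_insert]
    omega
  rw [h1, Finset.prod_insert (by simp [Finset.mem_erase, Finset.mem_Icc])]
  ring


section Main
variable (α β : ℕ → ℝ) (P : ℕ → ℕ → ℕ → ℝ)

private lemma urn_key (hα0 : α 0 = 0)
    (hα : ∀ i, 1 ≤ i → 0 < α i) (hβ : ∀ i, 1 ≤ i → 0 < β i)
    (hβdist : ∀ i j, 1 ≤ i → 1 ≤ j → i ≠ j → β i ≠ β j)
    (hPrec : ∀ n m k, 1 ≤ n → 1 ≤ m →
      P n m k = (α n / (α n + β m)) * P (n - 1) m k +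
        (β m / (α n + β m)) * P n (m - 1) k)
    (hP0 : ∀ n k, P n 0 k = if k = n then 1 else 0)
    (hP0' : ∀ m k, 1 ≤ m → P 0 m k = if k = 0 then 1 else 0) :
    ∀ N n m k, n + m ≤ N → 1 ≤ m → k ≤ n →
      P n m k = (∏ h ∈ Finset.Icc 1 m, β h) * (∏ h ∈ Finset.Icc (k + 1) n, α h) *
        ∑ l ∈ Finset.Icc 1 m,
          1 / ((∏ j ∈ Finset.Icc k n, (α j + β l)) *
            ∏ i ∈ (Finset.Icc 1 m).erase l, (β i - β l)) := by
  have hαnn : ∀ j, 0 ≤ α j := by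
    intro j
    rcases Nat.eq_zero_or_pos j with h | h
    · rw [h, hα0]
    · exact le_of_lt (hα j h)
  have hβinj : ∀ m : ℕ, Set.InjOn β (Finset.Icc 1 m) := by
    intro m i hi j hj hij
    by_contra hne
    exact hβdist i j (Finset.mem_Icc.mp hi).1 (Finset.mem_Icc.mp hj).1 hne hij
  have hD : ∀ m l, l ∈ Finset.Icc 1 m →
      (∏ i ∈ (Finset.Icc 1 m).erase l, (β i - β l)) ≠ 0 := by
    intro m l hl
    rw [Finset.prod_ne_zero_iff]
    intro i hi
    rw [Finset.mem_erase] at hi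
    exact sub_ne_zero.mpr
      (hβdist i l (Finset.mem_Icc.mp hi.2).1 (Finset.mem_Icc.mp hl).1 hi.1)
  have hQ : ∀ a b l, 1 ≤ l → (0:ℝ) < ∏ j ∈ Finset.Icc a b, (α j + β l) := by
    intro a b l hl
    exact Finset.prod_pos fun j _ => add_pos_of_nonneg_of_pos (hαnn j) (hβ l hl)
  have hvan := P_vanish α β P hPrec hP0 hP0'
  intro N
  induction N with
  | zero => intro n m k h hm; omega
  | succ N ihN =>
    intro n m k hnm hm hk
    obtain ⟨m', rfl⟩ : ∃ m', m = m' + 1 := ⟨m - 1, by omega⟩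
    rcases Nat.eq_zero_or_pos n with hn0 | hn1
    · -- base case n = 0, k = 0
      subst hn0
      obtain rfl : k = 0 := by omega
      rw [hP0' (m' + 1) 0 (by omega), if_pos rfl,
        show Finset.Icc (0 + 1) 0 = ∅ from Finset.Icc_eq_empty (by omega),
        Finset.prod_empty, mul_one]
      simp only [Finset.Icc_self, Finset.prod_singleton, hα0, zero_add]
      have hlag := lag_sum_one (Finset.Icc 1 (m' + 1)) β (hβinj _)
        (Finset.nonempty_Icc.mpr (by omega))
      have hstep : (∏ h ∈ Finset.Icc 1 (m' + 1), β h) *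
          ∑ l ∈ Finset.Icc 1 (m' + 1),
            1 / (β l * ∏ i ∈ (Finset.Icc 1 (m' + 1)).erase l, (β i - β l))
          = ∑ l ∈ Finset.Icc 1 (m' + 1),
            ∏ i ∈ (Finset.Icc 1 (m' + 1)).erase l, (β i / (β i - β l)) := by
        rw [Finset.mul_sum]
        refine Finset.sum_congr rfl fun l hl => ?_
        have hbl := hβ l (Finset.mem_Icc.mp hl).1
        have hDl := hD (m' + 1) l hl
        rw [Finset.prod_div_distrib, ← Finset.mul_prod_erase _ β hl]
        field_simp
      rw [hstep, hlag]
    · -- inductive case n = n' + 1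
      obtain ⟨n', rfl⟩ : ∃ n', n = n' + 1 := ⟨n - 1, by omega⟩
      rw [hPrec (n' + 1) (m' + 1) k (by omega) (by omega)]
      simp only [Nat.add_sub_cancel]
      have hs : α (n' + 1) + β (m' + 1) ≠ 0 :=
        (add_pos_of_nonneg_of_pos (hαnn _) (hβ _ (by omega))).ne'
      by_cases hkn : k = n' + 1
      · -- k = n case
        subst hkn
        rw [hvan (m' + 1) n' (n' + 1) (by omega), mul_zero, zero_add,
          show Finset.Icc (n' + 1 + 1) (n' + 1) = ∅ from Finset.Icc_eq_empty (by omega),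
          Finset.prod_empty, mul_one]
        rcases Nat.eq_zero_or_pos m' with hm0 | hm1
        · subst hm0
          rw [hP0 (n' + 1) (n' + 1), if_pos rfl, mul_one]
          simp only [Finset.Icc_self, Finset.prod_singleton, Finset.erase_singleton,
            Finset.prod_empty, mul_one]
          simp only [Finset.sum_singleton, Finset.erase_singleton, Finset.prod_empty, zero_add, mul_one]
          field_simp
        · -- m' ≥ 1
          have h2 := ihN (n' + 1) m' (n' + 1) (by omega) hm1 le_rfl
          rw [show Finset.Icc (n' + 1 + 1) (n' + 1) = ∅ from Finset.Icc_eq_empty (by omega),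
            Finset.prod_empty, mul_one] at h2
          simp only [Finset.Icc_self, Finset.prod_singleton] at h2 ⊢
          rw [h2]
          have hlag := lag_sum_zero (Finset.Icc 1 (m' + 1)) β (hβinj _)
            (by rw [Nat.card_Icc]; omega)
          have stepA : (∑ l ∈ Finset.Icc 1 (m' + 1),
                1 / ((α (n' + 1) + β l) * ∏ i ∈ (Finset.Icc 1 (m' + 1)).erase l, (β i - β l)))
              = ∑ l ∈ Finset.Icc 1 (m' + 1),
                ((1 / (α (n' + 1) + β (m' + 1))) *
                    (∏ i ∈ (Finset.Icc 1 (m' + 1)).erase l, (β i - β l))⁻¹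
                  + (1 / (α (n' + 1) + β (m' + 1))) * ((β (m' + 1) - β l) /
                  ((α (n' + 1) + β l) *
                    ∏ i ∈ (Finset.Icc 1 (m' + 1)).erase l, (β i - β l)))) := by
            refine Finset.sum_congr rfl fun l hl => ?_
            have hDl := hD (m' + 1) l hl
            have habl : α (n' + 1) + β l ≠ 0 :=
              (add_pos_of_nonneg_of_pos (hαnn _) (hβ l (Finset.mem_Icc.mp hl).1)).ne'
            field_simp
            ring
          have hS : (∑ l ∈ Finset.Icc 1 (m' + 1),
                1 / ((α (n' + 1) + β l) * ∏ i ∈ (Finset.Icc 1 (m' + 1)).erase l, (β i - β l)))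
              = ∑ l ∈ Finset.Icc 1 m',
                (1 / (α (n' + 1) + β (m' + 1))) * ((β (m' + 1) - β l) /
                  ((α (n' + 1) + β l) *
                    ∏ i ∈ (Finset.Icc 1 (m' + 1)).erase l, (β i - β l))) := by
            rw [stepA, Finset.sum_add_distrib, ← Finset.mul_sum, hlag, mul_zero, zero_add,
              Finset.sum_Icc_succ_top (by omega : 1 ≤ m' + 1)]
            simp [sub_self]
          rw [hS]
          simp only [Finset.mul_sum]
          refine Finset.sum_congr rfl fun l hl => ?_
          have hlm : l ≤ m' := (Finset.mem_Icc.mp hl).2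
          have hl1 : 1 ≤ l := (Finset.mem_Icc.mp hl).1
          have hl' : l ∈ Finset.Icc 1 (m' + 1) := Finset.mem_Icc.mpr ⟨hl1, by omega⟩
          have hDl := hD (m' + 1) l hl'
          have hD'l := hD m' l hl
          have habl : α (n' + 1) + β l ≠ 0 :=
            (add_pos_of_nonneg_of_pos (hαnn _) (hβ l hl1)).ne'
          have hbml : β (m' + 1) - β l ≠ 0 :=
            sub_ne_zero.mpr (hβdist (m' + 1) l (by omega) hl1 (by omega))
          rw [prod_erase_Icc_succ hl (fun i => β i - β l),
            Finset.prod_Icc_succ_top (by omega : 1 ≤ m' + 1) β]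
          field_simp
      · -- k ≤ n' case
        have hkn' : k ≤ n' := by omega
        have h1 := ihN n' (m' + 1) k (by omega) (by omega) hkn'
        have h2 : P (n' + 1) m' k = (∏ h ∈ Finset.Icc 1 m', β h) *
            (∏ h ∈ Finset.Icc (k + 1) (n' + 1), α h) *
            ∑ l ∈ Finset.Icc 1 m',
              1 / ((∏ j ∈ Finset.Icc k (n' + 1), (α j + β l)) *
                ∏ i ∈ (Finset.Icc 1 m').erase l, (β i - β l)) := by
          rcases Nat.eq_zero_or_pos m' with hm0 | hm1
          · subst hm0
            rw [hP0 (n' + 1) k, if_neg hkn,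
              show Finset.Icc 1 0 = ∅ from Finset.Icc_eq_empty (by omega)]
            simp
          · exact ihN (n' + 1) m' k (by omega) hm1 (by omega)
        rw [h1, h2]
        have hQl : ∀ l, (∏ j ∈ Finset.Icc k (n' + 1), (α j + β l))
            = (∏ j ∈ Finset.Icc k n', (α j + β l)) * (α (n' + 1) + β l) :=
          fun l => Finset.prod_Icc_succ_top (by omega) _
        have hA : (∏ h ∈ Finset.Icc (k + 1) (n' + 1), α h)
            = (∏ h ∈ Finset.Icc (k + 1) n', α h) * α (n' + 1) :=
          Finset.prod_Icc_succ_top (by omega) _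
        have hB : (∏ h ∈ Finset.Icc 1 (m' + 1), β h)
            = (∏ h ∈ Finset.Icc 1 m', β h) * β (m' + 1) :=
          Finset.prod_Icc_succ_top (by omega) _
        have hext : (∏ h ∈ Finset.Icc 1 m', β h) *
            (∏ h ∈ Finset.Icc (k + 1) (n' + 1), α h) *
            (∑ l ∈ Finset.Icc 1 m',
              1 / ((∏ j ∈ Finset.Icc k (n' + 1), (α j + β l)) *
                ∏ i ∈ (Finset.Icc 1 m').erase l, (β i - β l)))
            = ∑ l ∈ Finset.Icc 1 (m' + 1),
              (∏ h ∈ Finset.Icc 1 m', β h) *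
              (∏ h ∈ Finset.Icc (k + 1) (n' + 1), α h) *
              ((β (m' + 1) - β l) / ((∏ j ∈ Finset.Icc k (n' + 1), (α j + β l)) *
                ∏ i ∈ (Finset.Icc 1 (m' + 1)).erase l, (β i - β l))) := by
          rw [Finset.sum_Icc_succ_top (by omega : 1 ≤ m' + 1)]
          rw [show β (m' + 1) - β (m' + 1) = 0 from sub_self _]
          rw [zero_div, mul_zero, add_zero, Finset.mul_sum]
          refine Finset.sum_congr rfl fun l hl => ?_
          have hlm : l ≤ m' := (Finset.mem_Icc.mp hl).2
          have hl1 : 1 ≤ l := (Finset.mem_Icc.mp hl).1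
          have hD'l := hD m' l hl
          have hbml : β (m' + 1) - β l ≠ 0 :=
            sub_ne_zero.mpr (hβdist (m' + 1) l (by omega) hl1 (by omega))
          have hQf : (∏ j ∈ Finset.Icc k (n' + 1), (α j + β l)) ≠ 0 :=
            (hQ k (n' + 1) l hl1).ne'
          rw [prod_erase_Icc_succ hl (fun i => β i - β l)]
          field_simp
        rw [hext]
        simp only [Finset.mul_sum]
        rw [← Finset.sum_add_distrib]
        refine Finset.sum_congr rfl fun l hl => ?_
        have hl1 : 1 ≤ l := (Finset.mem_Icc.mp hl).1
        have hDl := hD (m' + 1) l hl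
        have habl : α (n' + 1) + β l ≠ 0 :=
          (add_pos_of_nonneg_of_pos (hαnn _) (hβ l hl1)).ne'
        have hQ1 : (∏ j ∈ Finset.Icc k n', (α j + β l)) ≠ 0 := (hQ k n' l hl1).ne'
        rw [hA, hB, hQl l]
        field_simp
        ring
end Main

/-- Explicit formula for the probability mass function in urn model I
(sampling without replacement with general weights). -/
theorem urn_model_I_pmf (α β : ℕ → ℝ) (hα0 : α 0 = 0)
    (hα : ∀ i, 1 ≤ i → 0 < α i) (hβ : ∀ i, 1 ≤ i → 0 < β i)
    (hαdist : ∀ i j, i ≠ j → α i ≠ α j)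
    (hβdist : ∀ i j, 1 ≤ i → 1 ≤ j → i ≠ j → β i ≠ β j)
    (P : ℕ → ℕ → ℕ → ℝ)
    (hPrec : ∀ n m k, 1 ≤ n → 1 ≤ m →
      P n m k = (α n / (α n + β m)) * P (n - 1) m k +
        (β m / (α n + β m)) * P n (m - 1) k)
    (hP0 : ∀ n k, P n 0 k = if k = n then 1 else 0)
    (hP0' : ∀ m k, 1 ≤ m → P 0 m k = if k = 0 then 1 else 0) :
    ∀ n m k, 1 ≤ n → 1 ≤ m → k ≤ n →
      P n m k = (∏ h ∈ Finset.Icc 1 m, β h) * (∏ h ∈ Finset.Icc (k + 1) n, α h) *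
        ∑ l ∈ Finset.Icc 1 m,
          1 / ((∏ j ∈ Finset.Icc k n, (α j + β l)) *
            ∏ i ∈ (Finset.Icc 1 m).erase l, (β i - β l)) := by
  intro n m k hn hm hk
  exact urn_key α β P hα0 hα hβ hβdist hPrec hP0 hP0' (n + m) n m k le_rfl hm hk
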